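/- Let N be a normal subgroup of a group G. Suppose S₁, S₂, S₃ ⊆ N are finite subsets satisfying the triple product property with |Sᵢ| = nᵢ, and T₁, T₂, T₃ ⊆ G are finite subsets such that the quotient map G → G/N is injective on each Tᵢ, |Tᵢ| = mᵢ, and the images of T₁, T₂, T₃ in G/N satisfy the triple product property. Then the pointwise product sets S₁T₁, S₂T₂, S₃T₃ satisfy the triple product property in G and |SᵢTᵢ| = nᵢmᵢ; hence G realizes ⟨n₁m₁, n₂m₂, n₃m₃⟩. -/

import Mathlib

/-- The right quotient set `Q(S) = {s₁s₂⁻¹ : s₁, s₂ ∈ S}` of a subset of a group. -/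
def rightQuotient {G : Type*} [Group G] (S : Set G) : Set G :=
  {g | ∃ s₁ ∈ S, ∃ s₂ ∈ S, g = s₁ * s₂⁻¹}

/-- Subsets `S₁, S₂, S₃` of a group satisfy the triple product property if whenever
`qᵢ ∈ Q(Sᵢ)` and `q₁q₂q₃ = 1`, we have `q₁ = q₂ = q₃ = 1`. -/
def TPP {G : Type*} [Group G] (S₁ S₂ S₃ : Set G) : Prop :=
  ∀ q₁ ∈ rightQuotient S₁, ∀ q₂ ∈ rightQuotient S₂, ∀ q₃ ∈ rightQuotient S₃,
    q₁ * q₂ * q₃ = 1 → q₁ = 1 ∧ q₂ = 1 ∧ q₃ = 1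

/-- A group `G` realizes `⟨n₁, n₂, n₃⟩` if there are finite subsets `Sᵢ ⊆ G` with
`|Sᵢ| = nᵢ` satisfying the triple product property. -/
def Realizes (G : Type*) [Group G] (n₁ n₂ n₃ : ℕ) : Prop :=
  ∃ S₁ S₂ S₃ : Set G, S₁.Finite ∧ S₂.Finite ∧ S₃.Finite ∧
    S₁.ncard = n₁ ∧ S₂.ncard = n₂ ∧ S₃.ncard = n₃ ∧ TPP S₁ S₂ S₃

open Pointwise

lemma ncard_sprod {α β : Type*} (S : Set α) (T : Set β) :
    (S ×ˢ T).ncard = S.ncard * T.ncard := by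
  rw [← Nat.card_coe_set_eq, ← Nat.card_coe_set_eq, ← Nat.card_coe_set_eq,
    Nat.card_congr (Equiv.Set.prod S T), Nat.card_prod]

lemma ncard_mul_aux {G : Type*} [Group G] (N : Subgroup G) [N.Normal] (S T : Set G)
    (hSN : S ⊆ (N : Set G))
    (hinj : Set.InjOn (QuotientGroup.mk : G → G ⧸ N) T) :
    (S * T).ncard = S.ncard * T.ncard := by
  have h : S * T = (fun p : G × G => p.1 * p.2) '' (S ×ˢ T) := by
    ext x
    simp only [Set.mem_mul, Set.mem_image, Set.mem_prod, Prod.exists]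
    tauto
  rw [h, Set.ncard_image_of_injOn, ncard_sprod]
  rintro ⟨s, t⟩ ⟨hs, ht⟩ ⟨s', t'⟩ ⟨hs', ht'⟩ (heq : s * t = s' * t')
  have hq : (QuotientGroup.mk (s * t) : G ⧸ N) = QuotientGroup.mk (s' * t') := by rw [heq]
  have hπs : (QuotientGroup.mk s : G ⧸ N) = 1 := (QuotientGroup.eq_one_iff s).mpr (hSN hs)
  have hπs' : (QuotientGroup.mk s' : G ⧸ N) = 1 := (QuotientGroup.eq_one_iff s').mpr (hSN hs')
  rw [QuotientGroup.mk_mul, QuotientGroup.mk_mul, hπs, hπs', one_mul, one_mul] at hq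
  have htt : t = t' := hinj ht ht' hq
  subst htt
  have : s = s' := by
    have := mul_right_cancel heq
    exact this
  simp [this]

theorem stmt_1 {G : Type*} [Group G] (N : Subgroup G) [N.Normal]
    (S₁ S₂ S₃ T₁ T₂ T₃ : Set G) (n₁ n₂ n₃ m₁ m₂ m₃ : ℕ)
    (hS₁N : S₁ ⊆ (N : Set G)) (hS₂N : S₂ ⊆ (N : Set G)) (hS₃N : S₃ ⊆ (N : Set G))
    (hS₁f : S₁.Finite) (hS₂f : S₂.Finite) (hS₃f : S₃.Finite)
    (hT₁f : T₁.Finite) (hT₂f : T₂.Finite) (hT₃f : T₃.Finite)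
    (hn₁ : S₁.ncard = n₁) (hn₂ : S₂.ncard = n₂) (hn₃ : S₃.ncard = n₃)
    (hm₁ : T₁.ncard = m₁) (hm₂ : T₂.ncard = m₂) (hm₃ : T₃.ncard = m₃)
    (hStpp : TPP S₁ S₂ S₃)
    (hinj₁ : Set.InjOn (QuotientGroup.mk : G → G ⧸ N) T₁)
    (hinj₂ : Set.InjOn (QuotientGroup.mk : G → G ⧸ N) T₂)
    (hinj₃ : Set.InjOn (QuotientGroup.mk : G → G ⧸ N) T₃)
    (hTtpp : TPP ((QuotientGroup.mk : G → G ⧸ N) '' T₁)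
      ((QuotientGroup.mk : G → G ⧸ N) '' T₂) ((QuotientGroup.mk : G → G ⧸ N) '' T₃)) :
    TPP (S₁ * T₁) (S₂ * T₂) (S₃ * T₃) ∧
    (S₁ * T₁).ncard = n₁ * m₁ ∧ (S₂ * T₂).ncard = n₂ * m₂ ∧ (S₃ * T₃).ncard = n₃ * m₃ ∧
    Realizes G (n₁ * m₁) (n₂ * m₂) (n₃ * m₃) := by
  have htpp : TPP (S₁ * T₁) (S₂ * T₂) (S₃ * T₃) := by
    intro q₁ hq₁ q₂ hq₂ q₃ hq₃ hprod
    obtain ⟨a₁, ha₁, b₁, hb₁, rfl⟩ := hq₁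
    obtain ⟨a₂, ha₂, b₂, hb₂, rfl⟩ := hq₂
    obtain ⟨a₃, ha₃, b₃, hb₃, rfl⟩ := hq₃
    obtain ⟨s₁, hs₁, t₁, ht₁, rfl⟩ := ha₁
    obtain ⟨s₁', hs₁', t₁', ht₁', rfl⟩ := hb₁
    obtain ⟨s₂, hs₂, t₂, ht₂, rfl⟩ := ha₂
    obtain ⟨s₂', hs₂', t₂', ht₂', rfl⟩ := hb₂
    obtain ⟨s₃, hs₃, t₃, ht₃, rfl⟩ := ha₃
    obtain ⟨s₃', hs₃', t₃', ht₃', rfl⟩ := hb₃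
    set π : G → G ⧸ N := QuotientGroup.mk with hπ
    have hπ1 : ∀ s ∈ S₁, π s = 1 := fun s hs => (QuotientGroup.eq_one_iff s).mpr (hS₁N hs)
    have hπ2 : ∀ s ∈ S₂, π s = 1 := fun s hs => (QuotientGroup.eq_one_iff s).mpr (hS₂N hs)
    have hπ3 : ∀ s ∈ S₃, π s = 1 := fun s hs => (QuotientGroup.eq_one_iff s).mpr (hS₃N hs)
    have hproj : ∀ (s s' t t' : G), π s = 1 → π s' = 1 →
        π (s * t * (s' * t')⁻¹) = π t * (π t')⁻¹ := by
      intro s s' t t' h1 h2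
      show QuotientGroup.mk _ = _
      rw [mul_inv_rev, ← mul_assoc]
      simp only [QuotientGroup.mk_mul, QuotientGroup.mk_inv]
      rw [show (QuotientGroup.mk s : G ⧸ N) = 1 from h1,
        show (QuotientGroup.mk s' : G ⧸ N) = 1 from h2]
      group
      rfl
    have e₁ := hproj s₁ s₁' t₁ t₁' (hπ1 _ hs₁) (hπ1 _ hs₁')
    have e₂ := hproj s₂ s₂' t₂ t₂' (hπ2 _ hs₂) (hπ2 _ hs₂')
    have e₃ := hproj s₃ s₃' t₃ t₃' (hπ3 _ hs₃) (hπ3 _ hs₃')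
    have hπprod : π (s₁ * t₁ * (s₁' * t₁')⁻¹) * π (s₂ * t₂ * (s₂' * t₂')⁻¹) *
        π (s₃ * t₃ * (s₃' * t₃')⁻¹) = 1 := by
      show (QuotientGroup.mk _ : G ⧸ N) * QuotientGroup.mk _ * QuotientGroup.mk _ = 1
      rw [← QuotientGroup.mk_mul, ← QuotientGroup.mk_mul, hprod, QuotientGroup.mk_one]
    rw [e₁, e₂, e₃] at hπprod
    obtain ⟨hT1, hT2, hT3⟩ := hTtpp _ ⟨π t₁, ⟨t₁, ht₁, rfl⟩, π t₁', ⟨t₁', ht₁', rfl⟩, rfl⟩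
      _ ⟨π t₂, ⟨t₂, ht₂, rfl⟩, π t₂', ⟨t₂', ht₂', rfl⟩, rfl⟩
      _ ⟨π t₃, ⟨t₃, ht₃, rfl⟩, π t₃', ⟨t₃', ht₃', rfl⟩, rfl⟩ hπprod
    have ht1 : t₁ = t₁' := hinj₁ ht₁ ht₁' (by rwa [mul_inv_eq_one] at hT1)
    have ht2 : t₂ = t₂' := hinj₂ ht₂ ht₂' (by rwa [mul_inv_eq_one] at hT2)
    have ht3 : t₃ = t₃' := hinj₃ ht₃ ht₃' (by rwa [mul_inv_eq_one] at hT3)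
    subst ht1; subst ht2; subst ht3
    have q1 : s₁ * t₁ * (s₁' * t₁)⁻¹ = s₁ * s₁'⁻¹ := by group
    have q2 : s₂ * t₂ * (s₂' * t₂)⁻¹ = s₂ * s₂'⁻¹ := by group
    have q3 : s₃ * t₃ * (s₃' * t₃)⁻¹ = s₃ * s₃'⁻¹ := by group
    rw [q1, q2, q3] at hprod ⊢
    exact hStpp _ ⟨s₁, hs₁, s₁', hs₁', rfl⟩ _ ⟨s₂, hs₂, s₂', hs₂', rfl⟩
      _ ⟨s₃, hs₃, s₃', hs₃', rfl⟩ hprod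
  have c₁ : (S₁ * T₁).ncard = n₁ * m₁ := by
    rw [ncard_mul_aux N S₁ T₁ hS₁N hinj₁, hn₁, hm₁]
  have c₂ : (S₂ * T₂).ncard = n₂ * m₂ := by
    rw [ncard_mul_aux N S₂ T₂ hS₂N hinj₂, hn₂, hm₂]
  have c₃ : (S₃ * T₃).ncard = n₃ * m₃ := by
    rw [ncard_mul_aux N S₃ T₃ hS₃N hinj₃, hn₃, hm₃]
  exact ⟨htpp, c₁, c₂, c₃, S₁ * T₁, S₂ * T₂, S₃ * T₃,
    hS₁f.mul hT₁f, hS₂f.mul hT₂f, hS₃f.mul hT₃f, c₁, c₂, c₃, htpp⟩
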